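/- Let P be a regular partition of K_{m_1(n_1),m_2(n_2)} such that τ(P) is asymmetric, let G be a connected component of τ'(P) containing at least one edge, define p by |V(G)| = n_1·|E(G)|/2 + p, and define j* ≥ -1 and k* ≥ 0 by 2p + μ(G) = |E(G)|·Σ_{i=0}^{j*} C(m_2,i) + k*, where either 0 ≤ k* < |E(G)|·C(m_2,j*+1), or k* = 0 and j* = m_2. Then w(G) ≤ m_2·(n_1·|E(G)|/2 - p - μ(G)) + |E(G)|·Σ_{i=0}^{j*} (m_2-i)·C(m_2,i) + (m_2-j*-1)·k* - d(G). -/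

import Mathlib

/-- Vertex type of the complete multipartite graph with `m1` parts of size `n1`
and `m2` parts of size `n2`.  The parts of size `n2` are indexed by `Fin m2`
(these play the role of `X_1, …, X_{m2}` in the paper). -/
abbrev MPV (m1 n1 m2 n2 : ℕ) : Type :=
  (Fin m1 × Fin n1) ⊕ (Fin m2 × Fin n2)

/-- The part (maximal independent set) containing a vertex. -/
def partOf {m1 n1 m2 n2 : ℕ} (v : MPV m1 n1 m2 n2) : Fin m1 ⊕ Fin m2 :=
  Sum.map Prod.fst Prod.fst v

/-- The complete multipartite graph `K_{m1(n1), m2(n2)}`. -/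
def KMP (m1 n1 m2 n2 : ℕ) : SimpleGraph (MPV m1 n1 m2 n2) :=
  SimpleGraph.comap partOf ⊤

/-- `P` is a regular partition: a partition of the vertex set each of whose parts
meets each maximal independent set in at most one vertex. -/
def IsRegularPartition {m1 n1 m2 n2 : ℕ} (P : Set (Set (MPV m1 n1 m2 n2))) : Prop :=
  Setoid.IsPartition P ∧
    ∀ p ∈ P, ∀ i : Fin m1 ⊕ Fin m2, {v | v ∈ p ∧ partOf v = i}.Subsingleton

/-- The incidence relation of the hypergraph `τ(P)`: its vertices are the parts of `P`,
its edges are the maximal independent sets, and a part is incident to a maximal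
independent set iff they intersect (for a regular partition, iff they intersect in
exactly one vertex). -/
def tauInc {m1 n1 m2 n2 : ℕ} (P : Set (Set (MPV m1 n1 m2 n2))) :
    ↥P → (Fin m1 ⊕ Fin m2) → Prop :=
  fun p i => ∃ v ∈ p.1, partOf v = i

/-- A hypergraph, given by its incidence relation, is asymmetric: its only
automorphism (pair of permutations of vertices and edges preserving incidence)
is the identity. -/
def HypAsymmetric {Vh Eh : Type*} (I : Vh → Eh → Prop) : Prop :=
  ∀ (σ : Equiv.Perm Vh) (τ : Equiv.Perm Eh),
    (∀ v e, I v e ↔ I (σ v) (τ e)) → σ = 1 ∧ τ = 1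

variable {m1 n1 m2 n2 : ℕ}

/-- Incidence of the hypergraph `τ'(P)`: only the `m1` edges of size `n1` are kept. -/
def tauInc' (P : Set (Set (MPV m1 n1 m2 n2))) (p : ↥P) (j : Fin m1) : Prop :=
  tauInc P p (Sum.inl j)

/-- The label of a vertex of `τ'(P)`: the set of indices `i ≤ m2` with the vertex
incident to the `n2`-edge `X_i`. -/
def labelOf (P : Set (Set (MPV m1 n1 m2 n2))) (p : ↥P) : Set (Fin m2) :=
  {i | tauInc P p (Sum.inr i)}

/-- The weight of a vertex of `τ'(P)`: the cardinality of its label. -/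
noncomputable def wtv (P : Set (Set (MPV m1 n1 m2 n2))) (p : ↥P) : ℕ :=
  (labelOf P p).ncard

/-- The degree of a vertex in `τ'(P)`. -/
noncomputable def degE (P : Set (Set (MPV m1 n1 m2 n2))) (p : ↥P) : ℕ :=
  {j : Fin m1 | tauInc' P p j}.ncard

/-- The incidence (bipartite) graph of `τ'(P)`, used to speak about its connected
components. -/
def incTG (P : Set (Set (MPV m1 n1 m2 n2))) : SimpleGraph (↥P ⊕ Fin m1) :=
  SimpleGraph.fromRel (fun a b => ∃ p j, a = Sum.inl p ∧ b = Sum.inr j ∧ tauInc' P p j)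

/-- The vertex set of a connected component of `τ'(P)`. -/
def compV (P : Set (Set (MPV m1 n1 m2 n2))) (c : (incTG P).ConnectedComponent) :
    Set ↥P :=
  {p | (incTG P).connectedComponentMk (Sum.inl p) = c}

/-- The edge set of a connected component of `τ'(P)`. -/
def compE (P : Set (Set (MPV m1 n1 m2 n2))) (c : (incTG P).ConnectedComponent) :
    Set (Fin m1) :=
  {j | (incTG P).connectedComponentMk (Sum.inr j) = c}

/-- The weight `w(G)` of a connected component `G` of `τ'(P)`. -/
noncomputable def wComp (P : Set (Set (MPV m1 n1 m2 n2)))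
    (c : (incTG P).ConnectedComponent) : ℕ :=
  ∑ᶠ p ∈ compV P c, wtv P p

/-- `μ(G) = Σ_{v : deg v > 2} (deg v - 2)` for a component `G` of `τ'(P)`. -/
noncomputable def muComp (P : Set (Set (MPV m1 n1 m2 n2)))
    (c : (incTG P).ConnectedComponent) : ℕ :=
  ∑ᶠ p ∈ compV P c, (degE P p - 2)

/-- `deg_1(e)`: the number of degree-1 vertices of the edge `e` of `τ'(P)`. -/
noncomputable def deg1E (P : Set (Set (MPV m1 n1 m2 n2))) (e : Fin m1) : ℕ :=
  {p | tauInc' P p e ∧ degE P p = 1}.ncard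

/-- The total weight of the degree-1 vertices of the edge `e` of `τ'(P)`. -/
noncomputable def wSE (P : Set (Set (MPV m1 n1 m2 n2))) (e : Fin m1) : ℕ :=
  ∑ᶠ p ∈ {p | tauInc' P p e ∧ degE P p = 1}, wtv P p

/-- `Σ_{i=0}^{t-1} C(m,i)`. -/
def binPartial (m t : ℕ) : ℕ :=
  ∑ i ∈ Finset.range t, Nat.choose m i

/-- The largest `t` (with `t = j' + 1` in the notation of the paper) such that
`Σ_{i=0}^{t-1} C(m,i) ≤ y`. -/
def wBt (m y : ℕ) : ℕ :=
  Nat.findGreatest (fun t => binPartial m t ≤ y) (m + 1)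

/-- The quantity `w_y`: writing `y = Σ_{i=0}^{j'} C(m,i) + k'` with `j' ≥ -1` and either
`0 ≤ k' < C(m,j'+1)`, or `k' = 0` and `j' = m`, define
`w_y = Σ_{i=0}^{j'} (m-i)·C(m,i) + k'(m-j'-1)`. -/
def wB (m y : ℕ) : ℕ :=
  (∑ i ∈ Finset.range (wBt m y), (m - i) * Nat.choose m i)
    + (y - binPartial m (wBt m y)) * (m - wBt m y)

/-- The number of defects `d(G)` of a component `G` of `τ'(P)`, counted with
multiplicity: each vertex `v` of degree at least `2` contributes `m2 - w(v)`, and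
each edge `e` contributes `w_{deg_1 e}` minus the weight of its degree-1 vertices. -/
noncomputable def dComp (P : Set (Set (MPV m1 n1 m2 n2)))
    (c : (incTG P).ConnectedComponent) : ℕ :=
  (∑ᶠ p ∈ {p ∈ compV P c | 2 ≤ degE P p}, (m2 - wtv P p))
    + ∑ᶠ e ∈ compE P c, (wB m2 (deg1E P e) - wSE P e)

namespace Aux
variable {m1 n1 m2 n2 : ℕ} {P : Set (Set (MPV m1 n1 m2 n2))}

example : Finite ↥P := inferInstance

lemma adj_inc {p : ↥P} {e : Fin m1} (h : tauInc' P p e) :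
    (incTG P).Adj (Sum.inl p) (Sum.inr e) := by
  rw [incTG, SimpleGraph.fromRel_adj]
  exact ⟨by simp, Or.inl ⟨p, e, rfl, rfl, h⟩⟩

lemma mem_compV_iff {c : (incTG P).ConnectedComponent} {p : ↥P} {e : Fin m1}
    (h : tauInc' P p e) : p ∈ compV P c ↔ e ∈ compE P c := by
  have h2 : (incTG P).connectedComponentMk (Sum.inl p)
      = (incTG P).connectedComponentMk (Sum.inr e) :=
    SimpleGraph.ConnectedComponent.sound (adj_inc h).reachable
  constructor
  · intro hp; exact h2.symm.trans hp
  · intro hp; exact h2.trans hp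

lemma exists_inc_of_mem_compV {c : (incTG P).ConnectedComponent}
    (hne : (compE P c).Nonempty) {p : ↥P} (hp : p ∈ compV P c) :
    ∃ e, tauInc' P p e := by
  obtain ⟨e₀, he₀⟩ := hne
  have hr : (incTG P).Reachable (Sum.inl p) (Sum.inr e₀) :=
    SimpleGraph.ConnectedComponent.exact (hp.trans he₀.symm)
  obtain ⟨w⟩ := hr
  have hnn : ¬ w.Nil := SimpleGraph.Walk.not_nil_of_ne (by simp)
  obtain ⟨u, hadj, q, rfl⟩ := SimpleGraph.Walk.not_nil_iff.mp hnn
  rw [incTG, SimpleGraph.fromRel_adj] at hadj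
  rcases hadj.2 with ⟨p', j, h1, h2, h3⟩ | ⟨p', j, h1, h2, h3⟩
  · exact ⟨j, (Sum.inl.inj h1) ▸ h3⟩
  · exact absurd h2 (by simp)

lemma deg1_unique {p : ↥P} {e : Fin m1} (hd : degE P p = 1) (he : tauInc' P p e) :
    {j | tauInc' P p j} = {e} := by
  obtain ⟨a, ha⟩ := Set.ncard_eq_one.mp hd
  rw [ha]
  have : e ∈ ({a} : Set (Fin m1)) := ha ▸ he
  simp at this
  rw [this]


lemma wtv_le (p : ↥P) : wtv P p ≤ m2 := by
  unfold wtv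
  calc (labelOf P p).ncard ≤ (Set.univ : Set (Fin m2)).ncard :=
        Set.ncard_le_ncard (Set.subset_univ _) (Set.toFinite _)
    _ = m2 := by rw [Set.ncard_univ, Nat.card_eq_fintype_card, Fintype.card_fin]

lemma edge_card (hreg : IsRegularPartition P) (e : Fin m1) :
    {p : ↥P | tauInc' P p e}.ncard = n1 := by
  classical
  have hex : ∀ v : MPV m1 n1 m2 n2, ∃! b, b ∈ P ∧ v ∈ b := hreg.1.2
  set F : Fin n1 → ↥P := fun a => ⟨(hex (Sum.inl (e, a))).choose,
    (hex (Sum.inl (e, a))).choose_spec.1.1⟩ with hF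
  have hmem : ∀ a : Fin n1, (Sum.inl (e, a) : MPV m1 n1 m2 n2) ∈ (F a).1 :=
    fun a => (hex (Sum.inl (e, a))).choose_spec.1.2
  have hinj : Function.Injective F := by
    intro a b hab
    have h1 : (Sum.inl (e, a) : MPV m1 n1 m2 n2) ∈ (F b).1 := hab ▸ hmem a
    have h2 := hmem b
    have hsub := hreg.2 (F b).1 (F b).2 (Sum.inl e)
    have := hsub (x := Sum.inl (e, a)) ⟨h1, rfl⟩ (y := Sum.inl (e, b)) ⟨h2, rfl⟩
    simpa using this
  have himg : {p : ↥P | tauInc' P p e} = Set.range F := by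
    ext q
    constructor
    · rintro ⟨v, hv, hpart⟩
      rcases v with ⟨j, a⟩ | w
      · have : j = e := by simpa [partOf] using hpart
        subst this
        refine ⟨a, ?_⟩
        have huniq := (hex (Sum.inl (j, a))).choose_spec.2 q.1 ⟨q.2, hv⟩
        exact Subtype.ext huniq.symm
      · simp [partOf] at hpart
    · rintro ⟨a, rfl⟩
      exact ⟨Sum.inl (e, a), hmem a, rfl⟩
  rw [himg, ← Set.image_univ, Set.ncard_image_of_injective _ hinj,
    Set.ncard_univ, Nat.card_eq_fintype_card, Fintype.card_fin]

lemma label_inj (hasym : HypAsymmetric (tauInc P)) {e : Fin m1} {p q : ↥P}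
    (hp : tauInc' P p e ∧ degE P p = 1) (hq : tauInc' P q e ∧ degE P q = 1)
    (hlab : labelOf P p = labelOf P q) : p = q := by
  classical
  by_contra hne
  have hpe := deg1_unique hp.2 hp.1
  have hqe := deg1_unique hq.2 hq.1
  have hiff : ∀ f, tauInc P p f ↔ tauInc P q f := by
    intro f
    rcases f with j | i
    · constructor
      · intro h
        have : j ∈ {j | tauInc' P p j} := h
        rw [hpe] at this
        simp at this
        subst this
        exact hq.1
      · intro h
        have : j ∈ {j | tauInc' P q j} := h
        rw [hqe] at this
        simp at this
        subst this
        exact hp.1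
    · constructor
      · intro h
        have : i ∈ labelOf P p := h
        rw [hlab] at this
        exact this
      · intro h
        have : i ∈ labelOf P q := h
        rw [← hlab] at this
        exact this
  have hpres : ∀ v f, tauInc P v f ↔ tauInc P (Equiv.swap p q v) ((1 : Equiv.Perm (Fin m1 ⊕ Fin m2)) f) := by
    intro v f
    simp only [Equiv.Perm.coe_one, id_eq]
    rcases eq_or_ne v p with rfl | hvp
    · rw [Equiv.swap_apply_left]
      exact hiff f
    rcases eq_or_ne v q with rfl | hvq
    · rw [Equiv.swap_apply_right]
      exact (hiff f).symm
    · rw [Equiv.swap_apply_of_ne_of_ne hvp hvq]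
  have := (hasym (Equiv.swap p q) 1 hpres).1
  have h2 : Equiv.swap p q p = p := by rw [this]; rfl
  rw [Equiv.swap_apply_left] at h2
  exact hne h2.symm

section Num


lemma bp_succ (m t : ℕ) : binPartial m (t + 1) = binPartial m t + Nat.choose m t :=
  Finset.sum_range_succ _ _

lemma bp_mono (m : ℕ) : Monotone (binPartial m) := by
  intro a b h
  exact Finset.sum_le_sum_of_subset (Finset.range_subset_range.2 h)

lemma bp_zero (m : ℕ) : binPartial m 0 = 0 := rfl

lemma bp_top (m : ℕ) : binPartial m (m + 1) = 2 ^ m := Nat.sum_range_choose m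

lemma wBt_le (m y : ℕ) : wBt m y ≤ m + 1 := Nat.findGreatest_le _

lemma bp_wBt_le (m y : ℕ) : binPartial m (wBt m y) ≤ y := by
  unfold wBt
  exact Nat.findGreatest_spec (P := fun t => binPartial m t ≤ y) (Nat.zero_le _)
    (by simp [bp_zero])

lemma lt_of_wBt_lt {m y t : ℕ} (h : wBt m y < t) (ht : t ≤ m + 1) :
    y < binPartial m t := by
  by_contra hy
  exact Nat.findGreatest_is_greatest (P := fun t => binPartial m t ≤ y) h ht
    (le_of_not_gt hy)

/-- `h(t) = Σ_{i<t} i C(m,i) + t (y - B_t)`. -/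
noncomputable def hZ (m y t : ℕ) : ℤ :=
  (∑ i ∈ Finset.range t, (i : ℤ) * Nat.choose m i) + t * ((y : ℤ) - binPartial m t)

lemma hZ_succ (m y t : ℕ) :
    hZ m y (t + 1) = hZ m y t + ((y : ℤ) - binPartial m (t + 1)) := by
  unfold hZ
  rw [Finset.sum_range_succ, bp_succ]
  push_cast
  ring

lemma hZ_le_of_le {m y a b : ℕ} (hab : a ≤ b) (hb : b ≤ wBt m y) :
    hZ m y a ≤ hZ m y b := by
  induction b, hab using Nat.le_induction with
  | base => exact le_refl _
  | succ n hn ih =>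
    have h1 : hZ m y a ≤ hZ m y n := ih (le_trans (Nat.le_succ n) hb)
    have h2 : binPartial m (n + 1) ≤ y :=
      le_trans (bp_mono m hb) (bp_wBt_le m y)
    rw [hZ_succ]
    have h3 : (0 : ℤ) ≤ (y : ℤ) - binPartial m (n + 1) := by
      have : (binPartial m (n+1) : ℤ) ≤ (y : ℤ) := by exact_mod_cast h2
      linarith
    linarith

lemma hZ_ge_of_le {m y a b : ℕ} (ha : wBt m y ≤ a) (hab : a ≤ b) (hb : b ≤ m + 1) :
    hZ m y b ≤ hZ m y a := by
  induction b, hab using Nat.le_induction with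
  | base => exact le_refl _
  | succ n hn ih =>
    have h1 : hZ m y n ≤ hZ m y a := ih (le_trans (Nat.le_succ n) hb)
    have hlt : y < binPartial m (n + 1) :=
      lt_of_wBt_lt (lt_of_le_of_lt ha (Nat.lt_succ_of_le hn)) hb
    rw [hZ_succ]
    have h3 : ((y : ℤ) - binPartial m (n + 1)) ≤ 0 := by
      have : (y : ℤ) < (binPartial m (n+1) : ℤ) := by exact_mod_cast hlt
      linarith
    linarith

lemma hZ_le (m y t : ℕ) (ht : t ≤ m + 1) : hZ m y t ≤ hZ m y (wBt m y) := by
  rcases le_or_gt t (wBt m y) with h | h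
  · exact hZ_le_of_le h (le_refl _)
  · exact hZ_ge_of_le (le_refl _) (le_of_lt h) ht

lemma sum_sub_choose (m t : ℕ) (ht : t ≤ m + 1) :
    ((∑ i ∈ Finset.range t, (m - i) * Nat.choose m i : ℕ) : ℤ)
      = m * binPartial m t - ∑ i ∈ Finset.range t, (i : ℤ) * Nat.choose m i := by
  unfold binPartial
  push_cast
  rw [Finset.mul_sum, ← Finset.sum_sub_distrib]
  apply Finset.sum_congr rfl
  intro i hi
  have hi' : i ≤ m := by
    have := Finset.mem_range.1 hi; omega
  rw [Int.ofNat_sub hi']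
  push_cast
  ring

lemma wB_eq (m y : ℕ) (hy : y ≤ 2 ^ m) :
    (wB m y : ℤ) = m * y - hZ m y (wBt m y) := by
  set s := wBt m y with hs
  have hsle : s ≤ m + 1 := wBt_le m y
  have hbs : binPartial m s ≤ y := bp_wBt_le m y
  unfold wB hZ
  rcases Nat.lt_or_ge s (m + 1) with hsm | hsm
  · have hsm' : s ≤ m := by omega
    rw [Nat.cast_add, Nat.cast_mul, sum_sub_choose m s hsle, Int.ofNat_sub hbs,
      Int.ofNat_sub hsm']
    push_cast
    ring
  · have hse : s = m + 1 := le_antisymm hsle hsm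
    have hy2 : y = 2 ^ m := by
      have : binPartial m s = 2 ^ m := by rw [hse]; exact bp_top m
      omega
    have hyB : y = binPartial m s := by
      rw [hse, bp_top]; exact hy2
    have h0 : y - binPartial m s = 0 := by omega
    rw [h0, ← hs]
    push_cast [sum_sub_choose m s hsle]
    rw [← hyB]
    push_cast
    ring
  

lemma core (m t y : ℕ) (ht : t ≤ m + 1) (hy : y ≤ 2 ^ m) :
    (wB m y : ℤ) + ((∑ i ∈ Finset.range t, (i : ℤ) * Nat.choose m i)
      + t * ((y : ℤ) - binPartial m t)) ≤ m * y := by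
  have h1 := hZ_le m y t ht
  have h2 := wB_eq m y hy
  unfold hZ at h1 h2
  linarith




lemma hZ_alt (m y t : ℕ) :
    hZ m y t = ∑ j ∈ Finset.range t, ((y : ℤ) - binPartial m (j + 1)) := by
  induction t with
  | zero => simp [hZ, bp_zero]
  | succ n ih => rw [hZ_succ, ih, Finset.sum_range_succ]

open Finset in
/-- number of subsets of `Fin m` of card ≤ j is `binPartial m (j+1)` -/
lemma card_le_filter (m j : ℕ) :
    ((Finset.univ : Finset (Finset (Fin m))).filter (fun T => T.card ≤ j)).card
      = binPartial m (j + 1) := by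
  classical
  have : ((Finset.univ : Finset (Finset (Fin m))).filter (fun T => T.card ≤ j))
      = (Finset.range (j+1)).biUnion (fun i => Finset.powersetCard i Finset.univ) := by
    ext T
    simp [Finset.mem_powersetCard, Nat.lt_succ_iff]
  rw [this, Finset.card_biUnion]
  · unfold binPartial
    apply Finset.sum_congr rfl
    intro i _
    rw [Finset.card_powersetCard, Finset.card_univ, Fintype.card_fin]
  · intro a _ b _ hab
    simp only [Finset.disjoint_left, Finset.mem_powersetCard]
    rintro T ⟨-, h1⟩ ⟨-, h2⟩
    exact hab (h1 ▸ h2 ▸ rfl)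

open Finset in
lemma lower_bound_sum (m : ℕ) (G : Finset (Finset (Fin m))) :
    hZ m G.card (wBt m G.card) ≤ ∑ T ∈ G, (T.card : ℤ) := by
  classical
  set y := G.card with hy
  set s := wBt m y with hs
  rw [hZ_alt]
  have step1 : ∀ j, ((y : ℤ) - binPartial m (j + 1))
      ≤ ((G.filter (fun T => j < T.card)).card : ℤ) := by
    intro j
    have hsplit : (G.filter (fun T => T.card ≤ j)).card
        + (G.filter (fun T => j < T.card)).card = y := by
      rw [hy]
      simpa [Nat.not_le] using
        Finset.card_filter_add_card_filter_not (s := G) (p := fun T => T.card ≤ j)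
    have hle : (G.filter (fun T => T.card ≤ j)).card ≤ binPartial m (j + 1) := by
      rw [← card_le_filter m j]
      apply Finset.card_le_card
      intro T hT
      simp only [Finset.mem_filter] at *
      exact ⟨Finset.mem_univ _, hT.2⟩
    have := hsplit
    have := hle
    omega
  calc ∑ j ∈ Finset.range s, ((y : ℤ) - binPartial m (j + 1))
      ≤ ∑ j ∈ Finset.range s, ((G.filter (fun T => j < T.card)).card : ℤ) :=
        Finset.sum_le_sum (fun j _ => step1 j)
    _ = ∑ j ∈ Finset.range s, ∑ T ∈ G, (if j < T.card then (1:ℤ) else 0) := by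
        apply Finset.sum_congr rfl
        intro j _
        rw [Finset.sum_boole]
    _ = ∑ T ∈ G, ∑ j ∈ Finset.range s, (if j < T.card then (1:ℤ) else 0) :=
        Finset.sum_comm
    _ ≤ ∑ T ∈ G, (T.card : ℤ) := by
        apply Finset.sum_le_sum
        intro T _
        rw [Finset.sum_boole]
        have : ((Finset.range s).filter (fun j => j < T.card)) ⊆ Finset.range T.card := by
          intro j hj
          simp only [Finset.mem_filter, Finset.mem_range] at *
          exact hj.2
        have := Finset.card_le_card this
        simp only [Finset.card_range] at this
        exact_mod_cast this

open Finset in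
lemma ext_lemma (m : ℕ) (F : Finset (Finset (Fin m))) :
    ∑ S ∈ F, S.card ≤ wB m F.card := by
  classical
  have hcard : F.card ≤ 2 ^ m := by
    have := Finset.card_le_card (Finset.subset_univ F)
    simpa [Finset.card_univ, Fintype.card_finset, Fintype.card_fin] using this
  set G : Finset (Finset (Fin m)) := F.image compl with hG
  have hinj : Set.InjOn compl (F : Set (Finset (Fin m))) := fun a _ b _ h => compl_injective h
  have hGcard : G.card = F.card := Finset.card_image_of_injOn hinj
  have hsum : ∑ S ∈ F, (S.card : ℤ) + ∑ T ∈ G, (T.card : ℤ) = m * F.card := by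
    rw [hG, Finset.sum_image (fun a ha b hb h => hinj ha hb h)]
    rw [← Finset.sum_add_distrib]
    have : ∀ S : Finset (Fin m), (S.card : ℤ) + (Sᶜ.card : ℤ) = m := by
      intro S
      have := Finset.card_add_card_compl S
      simp only [Fintype.card_fin] at this
      exact_mod_cast this
    rw [Finset.sum_congr rfl (fun S _ => this S)]
    simp [mul_comm]
  have hlow := lower_bound_sum m G
  have hwb := wB_eq m F.card hcard
  rw [hGcard] at hlow
  have : (∑ S ∈ F, (S.card : ℤ)) ≤ (wB m F.card : ℤ) := by
    rw [hwb]
    linarith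
  exact_mod_cast (by push_cast at this ⊢; exact_mod_cast this : ((∑ S ∈ F, S.card : ℕ) : ℤ) ≤ (wB m F.card : ℤ))


end Num
end Aux


set_option maxHeartbeats 1000000 in
theorem weight_component_bound_global
    (m1 n1 m2 n2 : ℕ) (P : Set (Set (MPV m1 n1 m2 n2)))
    (hreg : IsRegularPartition P) (hasym : HypAsymmetric (tauInc P))
    (c : (incTG P).ConnectedComponent) (hne : (compE P c).Nonempty)
    (p : ℚ)
    (hp : ((compV P c).ncard : ℚ) = n1 * (compE P c).ncard / 2 + p)
    (t kst : ℕ)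
    (hjk : 2 * p + (muComp P c : ℚ)
      = (compE P c).ncard * (∑ i ∈ Finset.range t, (Nat.choose m2 i : ℚ)) + kst)
    (hcond : kst < (compE P c).ncard * Nat.choose m2 t ∨ (kst = 0 ∧ t = m2 + 1)) :
    (wComp P c : ℚ)
      ≤ m2 * (n1 * (compE P c).ncard / 2 - p - muComp P c)
        + (compE P c).ncard * (∑ i ∈ Finset.range t, ((m2 - i : ℚ)) * Nat.choose m2 i)
        + ((m2 : ℚ) - t) * kst
        - dComp P c := by
  classical
  -- t is at most m2 + 1
  have ht : t ≤ m2 + 1 := by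
    rcases hcond with h | ⟨-, h⟩
    · by_contra hlt
      have : Nat.choose m2 t = 0 := Nat.choose_eq_zero_of_lt (by omega)
      rw [this, Nat.mul_zero] at h
      omega
    · omega
  -- Finsets for the various vertex/edge sets
  set sF : Finset ↥P := (Set.toFinite (compV P c)).toFinset with hsF
  set EF : Finset (Fin m1) := (Set.toFinite (compE P c)).toFinset with hEF
  have hmem_sF : ∀ q : ↥P, q ∈ sF ↔ q ∈ compV P c := by
    intro q; rw [hsF, Set.Finite.mem_toFinset]
  have hmem_EF : ∀ e : Fin m1, e ∈ EF ↔ e ∈ compE P c := by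
    intro e; rw [hEF, Set.Finite.mem_toFinset]
  set s1F : Finset ↥P := sF.filter (fun q => degE P q = 1) with hs1F
  set s2F : Finset ↥P := sF.filter (fun q => ¬ degE P q = 1) with hs2F
  -- each vertex of the component has positive degree
  have hdegpos : ∀ q ∈ sF, 1 ≤ degE P q := by
    intro q hq
    obtain ⟨e, he⟩ := Aux.exists_inc_of_mem_compV hne ((hmem_sF q).mp hq)
    have : ({j | tauInc' P q j} : Set (Fin m1)).Nonempty := ⟨e, he⟩
    have h2 := (Set.ncard_pos (Set.toFinite _)).mpr this
    have h3 : degE P q = {j | tauInc' P q j}.ncard := rfl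
    omega
  have hdeg2 : ∀ q ∈ s2F, 2 ≤ degE P q := by
    intro q hq
    rw [hs2F, Finset.mem_filter] at hq
    have := hdegpos q hq.1
    omega
  -- the degree-1 vertices of an edge, as a Finset
  set DeF : Fin m1 → Finset ↥P :=
    fun e => (Set.toFinite {q : ↥P | tauInc' P q e ∧ degE P q = 1}).toFinset with hDeF
  have hmem_DeF : ∀ e (q : ↥P), q ∈ DeF e ↔ tauInc' P q e ∧ degE P q = 1 := by
    intro e q; rw [hDeF, Set.Finite.mem_toFinset]; rfl
  -- conversion of the finsums
  have hwComp : wComp P c = ∑ q ∈ sF, wtv P q :=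
    finsum_mem_eq_finite_toFinset_sum _ _
  have hmuComp : muComp P c = ∑ q ∈ sF, (degE P q - 2) :=
    finsum_mem_eq_finite_toFinset_sum _ _
  have hwSE : ∀ e, wSE P e = ∑ q ∈ DeF e, wtv P q := fun e =>
    finsum_mem_eq_finite_toFinset_sum _ _
  have hdeg1E : ∀ e, deg1E P e = (DeF e).card := by
    intro e
    rw [deg1E, Set.ncard_eq_toFinset_card _ (Set.toFinite _)]
  have hdComp : dComp P c = (∑ q ∈ s2F, (m2 - wtv P q))
      + ∑ e ∈ EF, (wB m2 (deg1E P e) - wSE P e) := by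
    rw [dComp]
    congr 1
    · rw [finsum_mem_eq_finite_toFinset_sum _ (Set.toFinite _)]
      apply Finset.sum_congr _ (fun _ _ => rfl)
      ext q
      simp only [Set.Finite.mem_toFinset, hs2F, Finset.mem_filter, hmem_sF,
        Set.mem_setOf_eq]
      constructor
      · rintro ⟨h1, h2⟩; exact ⟨h1, by omega⟩
      · rintro ⟨h1, h2⟩
        exact ⟨h1, by have := hdegpos q ((hmem_sF q).mpr h1); omega⟩
    · rw [finsum_mem_eq_finite_toFinset_sum _ (Set.toFinite _)]
  -- decomposition of the vertex set by degree
  have hsum_split : ∀ f : ↥P → ℕ,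
      ∑ q ∈ sF, f q = ∑ q ∈ s1F, f q + ∑ q ∈ s2F, f q := by
    intro f
    rw [hs1F, hs2F]
    exact (Finset.sum_filter_add_sum_filter_not sF _ f).symm
  -- s1F is the disjoint union of the DeF e over e ∈ EF
  have hdisj : ∀ e ∈ EF, ∀ e' ∈ EF, e ≠ e' → Disjoint (DeF e) (DeF e') := by
    intro e _ e' _ hee
    rw [Finset.disjoint_left]
    intro q hq hq'
    rw [hmem_DeF] at hq hq'
    have h1 := Aux.deg1_unique hq.2 hq.1
    have : e' ∈ ({e} : Set (Fin m1)) := h1 ▸ hq'.1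
    simp at this
    exact hee this.symm
  have hbiUnion : s1F = EF.biUnion DeF := by
    ext q
    rw [hs1F, Finset.mem_filter, Finset.mem_biUnion]
    constructor
    · rintro ⟨hq, hd⟩
      obtain ⟨e, he⟩ := Aux.exists_inc_of_mem_compV hne ((hmem_sF q).mp hq)
      exact ⟨e, (hmem_EF e).mpr ((Aux.mem_compV_iff he).mp ((hmem_sF q).mp hq)),
        (hmem_DeF e q).mpr ⟨he, hd⟩⟩
    · rintro ⟨e, heE, hq⟩
      rw [hmem_DeF] at hq
      exact ⟨(hmem_sF q).mpr ((Aux.mem_compV_iff hq.1).mpr ((hmem_EF e).mp heE)), hq.2⟩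
  have hfiber : ∀ f : ↥P → ℕ, ∑ q ∈ s1F, f q = ∑ e ∈ EF, ∑ q ∈ DeF e, f q := by
    intro f
    rw [hbiUnion, Finset.sum_biUnion hdisj]
  -- handshake: sum of degrees = n1 * #edges
  have hhand : ∑ q ∈ sF, degE P q = n1 * EF.card := by
    have hdeg : ∀ q : ↥P, degE P q
        = (Finset.univ.filter (fun j => tauInc' P q j)).card := by
      intro q
      rw [degE, ← Set.toFinset_setOf, Set.ncard_eq_toFinset_card']
    calc ∑ q ∈ sF, degE P q
        = ∑ q ∈ sF, ∑ j : Fin m1, (if tauInc' P q j then 1 else 0) := by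
          apply Finset.sum_congr rfl
          intro q _
          rw [hdeg q, Finset.sum_boole]
          simp
      _ = ∑ j : Fin m1, ∑ q ∈ sF, (if tauInc' P q j then 1 else 0) :=
          Finset.sum_comm
      _ = ∑ j : Fin m1, (if j ∈ EF then n1 else 0) := by
          apply Finset.sum_congr rfl
          intro j _
          rw [Finset.sum_boole]
          by_cases hj : j ∈ EF
          · rw [if_pos hj]
            have : sF.filter (fun q => tauInc' P q j)
                = (Set.toFinite {q : ↥P | tauInc' P q j}).toFinset := by
              ext q
              simp only [Finset.mem_filter, Set.Finite.mem_toFinset, Set.mem_setOf_eq]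
              constructor
              · rintro ⟨-, h2⟩; exact h2
              · intro h
                refine ⟨?_, h⟩
                rw [hmem_sF]
                exact (Aux.mem_compV_iff h).mpr ((hmem_EF j).mp hj)
            rw [this, ← Set.ncard_eq_toFinset_card _ (Set.toFinite _),
              Aux.edge_card hreg j]
            simp
          · rw [if_neg hj]
            have : sF.filter (fun q => tauInc' P q j) = ∅ := by
              rw [Finset.filter_eq_empty_iff]
              intro q hq hinc
              exact hj ((hmem_EF j).mpr ((Aux.mem_compV_iff hinc).mp ((hmem_sF q).mp hq)))
            rw [this]
            simp
      _ = n1 * EF.card := by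
          rw [Finset.sum_ite_mem, Finset.univ_inter, Finset.sum_const, smul_eq_mul,
            mul_comm]
  -- cardinal bookkeeping in ℕ
  have hVcard : (compV P c).ncard = s1F.card + s2F.card := by
    have h0 : (compV P c).ncard = sF.card := Set.ncard_eq_toFinset_card _ _
    rw [h0, hs1F, hs2F]
    exact (Finset.card_filter_add_card_filter_not (p := fun q => degE P q = 1)).symm
  have hEcard : (compE P c).ncard = EF.card :=
    Set.ncard_eq_toFinset_card _ (Set.toFinite _)
  have hhand2 : s1F.card + (muComp P c + 2 * s2F.card) = n1 * EF.card := by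
    rw [← hhand, hsum_split (degE P)]
    have h1 : ∑ q ∈ s1F, degE P q = s1F.card := by
      rw [Finset.card_eq_sum_ones]
      apply Finset.sum_congr rfl
      intro q hq
      rw [hs1F, Finset.mem_filter] at hq
      exact hq.2
    have h2 : ∑ q ∈ s2F, degE P q = muComp P c + 2 * s2F.card := by
      rw [hmuComp, hsum_split (fun q => degE P q - 2)]
      have h3 : ∑ q ∈ s1F, (degE P q - 2) = 0 := by
        apply Finset.sum_eq_zero
        intro q hq
        rw [hs1F, Finset.mem_filter] at hq
        omega
      rw [h3, zero_add, Finset.card_eq_sum_ones, Finset.mul_sum, ← Finset.sum_add_distrib]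
      apply Finset.sum_congr rfl
      intro q hq
      have := hdeg2 q hq
      omega
    rw [h1, h2]
  have hs1card : s1F.card = ∑ e ∈ EF, deg1E P e := by
    rw [Finset.card_eq_sum_ones, hfiber (fun _ => 1)]
    apply Finset.sum_congr rfl
    intro e _
    rw [hdeg1E e, Finset.card_eq_sum_ones]
  -- per-edge weight bound from asymmetry and the extremal lemma
  have hedge : ∀ e : Fin m1, wSE P e ≤ wB m2 (deg1E P e) ∧ deg1E P e ≤ 2 ^ m2 := by
    intro e
    set lab : ↥P → Finset (Fin m2) := fun q => (Set.toFinite (labelOf P q)).toFinset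
      with hlab
    have hinj : Set.InjOn lab (DeF e : Set ↥P) := by
      intro a ha b hb hab
      rw [Finset.mem_coe, hmem_DeF] at ha hb
      refine Aux.label_inj hasym ha hb ?_
      rw [← Set.Finite.coe_toFinset (Set.toFinite (labelOf P a)),
        ← Set.Finite.coe_toFinset (Set.toFinite (labelOf P b))]
      exact congrArg _ hab
    have hwtv : ∀ q : ↥P, wtv P q = (lab q).card := by
      intro q
      rw [wtv, Set.ncard_eq_toFinset_card _ (Set.toFinite _)]
    have hcard : ((DeF e).image lab).card = deg1E P e := by
      rw [Finset.card_image_of_injOn hinj, hdeg1E e]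
    constructor
    · calc wSE P e = ∑ q ∈ DeF e, (lab q).card := by
            rw [hwSE e]; exact Finset.sum_congr rfl (fun q _ => hwtv q)
        _ = ∑ S ∈ (DeF e).image lab, S.card := (Finset.sum_image
            (fun a ha b hb h => hinj ha hb h)).symm
        _ ≤ wB m2 ((DeF e).image lab).card := Aux.ext_lemma m2 _
        _ = wB m2 (deg1E P e) := by rw [hcard]
    · rw [← hcard]
      calc ((DeF e).image lab).card ≤ Fintype.card (Finset (Fin m2)) :=
            Finset.card_le_univ _
        _ = 2 ^ m2 := by rw [Fintype.card_finset, Fintype.card_fin]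
  -- ℚ abbreviations
  set Sq : ℚ := ∑ i ∈ Finset.range t, (Nat.choose m2 i : ℚ) with hSq
  set Tq : ℚ := ∑ i ∈ Finset.range t, (i : ℚ) * (Nat.choose m2 i : ℚ) with hTq
  have hBPq : (binPartial m2 t : ℚ) = Sq := by
    rw [hSq, binPartial]
    push_cast
    rfl
  -- the main ℕ identity : w(G) + d(G) = m2 * |s2| + Σ_e wB
  have hkeyN : wComp P c + dComp P c
      = m2 * s2F.card + ∑ e ∈ EF, wB m2 (deg1E P e) := by
    rw [hwComp, hdComp, hsum_split (wtv P), hfiber (wtv P)]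
    have h1 : ∑ q ∈ s2F, wtv P q + ∑ q ∈ s2F, (m2 - wtv P q) = m2 * s2F.card := by
      rw [← Finset.sum_add_distrib, Finset.card_eq_sum_ones, Finset.mul_sum]
      apply Finset.sum_congr rfl
      intro q _
      have := Aux.wtv_le (P := P) q
      omega
    have h2 : ∑ e ∈ EF, ∑ q ∈ DeF e, wtv P q
        + ∑ e ∈ EF, (wB m2 (deg1E P e) - wSE P e)
        = ∑ e ∈ EF, wB m2 (deg1E P e) := by
      rw [← Finset.sum_add_distrib]
      apply Finset.sum_congr rfl
      intro e _
      have h3 := (hedge e).1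
      rw [← hwSE e]
      omega
    omega
  -- per-edge numeric bound, summed over the edges (in ℚ)
  have hcoreQ : ∀ e : Fin m1, (wB m2 (deg1E P e) : ℚ)
      ≤ m2 * deg1E P e - Tq - t * ((deg1E P e : ℚ) - Sq) := by
    intro e
    have := Aux.core m2 t (deg1E P e) ht (hedge e).2
    have hq : ((wB m2 (deg1E P e) : ℤ) : ℚ)
        + ((∑ i ∈ Finset.range t, (i : ℤ) * Nat.choose m2 i : ℤ)
          + (t : ℤ) * ((deg1E P e : ℤ) - (binPartial m2 t : ℤ)))
        ≤ ((m2 : ℤ) : ℚ) * ((deg1E P e : ℤ) : ℚ) := by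
      exact_mod_cast this
    push_cast at hq
    rw [hBPq] at hq
    rw [hTq]
    linarith
  have hsumcore : (∑ e ∈ EF, (wB m2 (deg1E P e) : ℚ))
      ≤ m2 * (s1F.card : ℚ) - EF.card * Tq - t * ((s1F.card : ℚ) - EF.card * Sq) := by
    have h1 : (∑ e ∈ EF, (wB m2 (deg1E P e) : ℚ))
        ≤ ∑ e ∈ EF, (m2 * (deg1E P e : ℚ) - Tq - t * ((deg1E P e : ℚ) - Sq)) :=
      Finset.sum_le_sum (fun e _ => hcoreQ e)
    have h2 : (s1F.card : ℚ) = ∑ e ∈ EF, (deg1E P e : ℚ) := by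
      rw [hs1card]
      push_cast
      rfl
    rw [h2]
    refine h1.trans_eq ?_
    simp only [mul_sub, Finset.sum_sub_distrib, Finset.mul_sum, Finset.sum_const,
      nsmul_eq_mul]
    push_cast
    ring
  -- key inequality in ℚ
  have hY1 : (s1F.card : ℚ) = EF.card * Sq + kst := by
    have hh := hhand2
    have hv := hVcard
    have he := hEcard
    rw [he] at hp hjk
    have hhQ : (s1F.card : ℚ) + ((muComp P c : ℚ) + 2 * s2F.card)
        = n1 * EF.card := by exact_mod_cast hh
    have hvQ : ((compV P c).ncard : ℚ) = s1F.card + s2F.card := by exact_mod_cast hv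
    rw [hvQ] at hp
    linarith [hjk, hp, hhQ]
  have hkey : (wComp P c : ℚ) + dComp P c + EF.card * Tq + t * kst
      ≤ m2 * ((compV P c).ncard : ℚ) := by
    have h1 : (wComp P c : ℚ) + dComp P c
        = m2 * s2F.card + ∑ e ∈ EF, (wB m2 (deg1E P e) : ℚ) := by
      have h1c := congrArg (fun n : ℕ => (n : ℚ)) hkeyN
      push_cast at h1c
      exact h1c
    have h2 : (s1F.card : ℚ) - EF.card * Sq = kst := by linarith [hY1]
    have hvQ : ((compV P c).ncard : ℚ) = s1F.card + s2F.card := by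
      exact_mod_cast hVcard
    rw [h1, hvQ]
    have := hsumcore
    rw [h2] at this
    linarith
  -- final algebra
  have hsplitSum : ∑ i ∈ Finset.range t, ((m2 - i : ℚ)) * Nat.choose m2 i
      = m2 * Sq - Tq := by
    rw [hSq, hTq, Finset.mul_sum, ← Finset.sum_sub_distrib]
    apply Finset.sum_congr rfl
    intro i _
    ring
  rw [hEcard] at hp hjk
  rw [hsplitSum, hEcard]
  have h1 : (n1 : ℚ) * EF.card / 2 = ((compV P c).ncard : ℚ) - p := by
    linarith [hp]
  rw [h1]
  have hm2jk : (m2 : ℚ) * (2 * p + (muComp P c : ℚ))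
      = m2 * ((EF.card : ℚ) * Sq + kst) := by rw [hjk]
  linarith [hkey, hm2jk]
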